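/- If n ≥ 4 and S ⊆ {3,4,...,n-1} is a distinct cycle set, then the graph G_n(S) has exactly n + |S| edges and no two cycles in G_n(S) have the same length. -/

import Mathlib

/-- The cycle `C_n` on vertex set `Fin n`, where label `i` represents the integer `i + 1`;
edges join consecutive integers mod `n` (i.e. `{i, i+1}` for `1 ≤ i ≤ n - 1` and `{n, 1}`). -/
def cycG (n : ℕ) : SimpleGraph (Fin n) :=
  SimpleGraph.fromRel (fun i j => (i.val + 1) % n = j.val)

/-- The graph `G_n(S)`: the cycle `C_n` together with a chord `{1, a}` for each `a ∈ S`
(vertex label `i` represents the integer `i + 1`, so the integer vertex `1` is label `0`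
and the integer vertex `a` is label `a - 1`). -/
def GnS (n : ℕ) (S : Finset ℕ) : SimpleGraph (Fin n) :=
  SimpleGraph.fromRel (fun i j => (i.val + 1) % n = j.val ∨ (i.val = 0 ∧ j.val + 1 ∈ S))

/-- A graph on a finite vertex type is Hamiltonian if it has a cycle through all vertices,
i.e. a cycle whose length equals the number of vertices. -/
def IsHamiltonianGraph {V : Type*} [Fintype V] (G : SimpleGraph V) : Prop :=
  ∃ (u : V) (p : G.Walk u u), p.IsCycle ∧ p.length = Fintype.card V

/-- No two cycles of `G` have the same length: any two cycles with equal length are the same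
cycle, i.e. have the same edge set. -/
def NoRepeatedCycleLength {V : Type*} (G : SimpleGraph V) : Prop :=
  ∀ (u v : V) (p : G.Walk u u) (q : G.Walk v v),
    p.IsCycle → q.IsCycle → p.length = q.length →
      {e | e ∈ p.edges} = {e | e ∈ q.edges}

/-- `S` is a distinct cycle set (for a given `n`): (1) the differences `b - a` with
`a < b` in `S` are pairwise distinct, and (2) the three sets `S`,
`S_n^* = {n + 2 - a : a ∈ S}` and `S^- = {b - a + 2 : a, b ∈ S, b > a}`
are pairwise disjoint. -/
def DistinctCycleSet (n : ℕ) (S : Finset ℕ) : Prop :=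
  (∀ a ∈ S, ∀ b ∈ S, ∀ c ∈ S, ∀ d ∈ S, a < b → c < d → b - a = d - c → a = c ∧ b = d) ∧
  (∀ a ∈ S, ∀ b ∈ S, a ≠ n + 2 - b) ∧
  (∀ a ∈ S, ∀ b ∈ S, ∀ c ∈ S, b < c → a ≠ c - b + 2) ∧
  (∀ a ∈ S, ∀ b ∈ S, ∀ c ∈ S, b < c → n + 2 - a ≠ c - b + 2)

section Aux
variable {n : ℕ} {S : Finset ℕ}

lemma GnS_adj_elim (hn : 4 ≤ n) {i j : Fin n} (h : (GnS n S).Adj i j) :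
    i ≠ j ∧ (i.val = 0 ∨ j.val = 0 ∨ j.val = i.val + 1 ∨ i.val = j.val + 1) := by
  rw [GnS, SimpleGraph.fromRel_adj] at h
  obtain ⟨hne, h⟩ := h
  refine ⟨hne, ?_⟩
  have hi := i.isLt; have hj := j.isLt
  rcases h with (h | h) | (h | h)
  · rcases Nat.lt_or_ge (i.val + 1) n with hlt | hge
    · rw [Nat.mod_eq_of_lt hlt] at h; omega
    · have he : i.val + 1 = n := by omega
      rw [he, Nat.mod_self] at h; omega
  · exact Or.inl h.1
  · rcases Nat.lt_or_ge (j.val + 1) n with hlt | hge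
    · rw [Nat.mod_eq_of_lt hlt] at h; omega
    · have he : j.val + 1 = n := by omega
      rw [he, Nat.mod_self] at h; omega
  · exact Or.inr (Or.inl h.1)

lemma GnS_adj_zero [NeZero n] (hn : 4 ≤ n) {w : Fin n} (h : (GnS n S).Adj 0 w) :
    w.val ≠ 0 ∧ (w.val = 1 ∨ w.val = n - 1 ∨ w.val + 1 ∈ S) := by
  rw [GnS, SimpleGraph.fromRel_adj] at h
  obtain ⟨hne, h⟩ := h
  have hw0 : w.val ≠ 0 := by
    intro hw; exact hne (Fin.ext (by simp [hw])).symm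
  refine ⟨hw0, ?_⟩
  have hw := w.isLt
  simp only [Fin.val_zero] at h
  rcases h with (h | h) | (h | h)
  · rw [Nat.mod_eq_of_lt (by omega)] at h; omega
  · exact Or.inr (Or.inr h.2)
  · rcases Nat.lt_or_ge (w.val + 1) n with hlt | hge
    · rw [Nat.mod_eq_of_lt hlt] at h; omega
    · have he : w.val + 1 = n := by omega
      omega
  · omega

lemma GnS_adj_succ [NeZero n] (hn : 4 ≤ n) (i : Fin n) : (GnS n S).Adj i (i + 1) := by
  have hval : ((i + 1 : Fin n)).val = (i.val + 1) % n := by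
    have h1 : 1 % n = 1 := Nat.mod_eq_of_lt (by omega)
    rw [Fin.add_def, Fin.val_one', h1]
  rw [GnS, SimpleGraph.fromRel_adj]
  constructor
  · intro he
    have : i.val = (i.val + 1) % n := by rw [← hval]; exact congrArg Fin.val he
    have hi := i.isLt
    rcases Nat.lt_or_ge (i.val + 1) n with hlt | hge
    · rw [Nat.mod_eq_of_lt hlt] at this; omega
    · have he2 : i.val + 1 = n := by omega
      rw [he2, Nat.mod_self] at this; omega
  · exact Or.inl (Or.inl hval.symm)

lemma GnS_adj_chord [NeZero n] (hn : 4 ≤ n) (hS : S ⊆ Finset.Icc 3 (n - 1)) {v : Fin n}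
    (hv : v.val + 1 ∈ S) : (GnS n S).Adj 0 v := by
  have hb := Finset.mem_Icc.mp (hS hv)
  rw [GnS, SimpleGraph.fromRel_adj]
  exact ⟨fun he => by have : v.val = 0 := by rw [← he]; rfl
                      omega,
         Or.inl (Or.inr ⟨rfl, hv⟩)⟩

/-- the edge finset of `GnS`. -/
def GnSEdges (n : ℕ) (S : Finset ℕ) [NeZero n] : Finset (Sym2 (Fin n)) :=
  (Finset.univ.image fun i : Fin n => s(i, i + 1)) ∪
    ((Finset.univ.filter fun v : Fin n => v.val + 1 ∈ S).image fun v => s(0, v))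

lemma val_add_one [NeZero n] (hn : 4 ≤ n) (i : Fin n) :
    ((i + 1 : Fin n)).val = (i.val + 1) % n := by
  have h1 : 1 % n = 1 := Nat.mod_eq_of_lt (by omega)
  rw [Fin.add_def, Fin.val_one', h1]

lemma GnS_edgeSet [NeZero n] (hn : 4 ≤ n) (hS : S ⊆ Finset.Icc 3 (n - 1)) :
    (GnS n S).edgeSet = ↑(GnSEdges n S) := by
  ext e
  induction e with
  | _ a b =>
    simp only [SimpleGraph.mem_edgeSet, GnSEdges, Finset.coe_union, Set.mem_union,
      Finset.coe_image, Set.mem_image, Finset.mem_coe, Finset.mem_filter, Finset.mem_univ,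
      true_and, Finset.coe_filter, Set.mem_setOf_eq]
    constructor
    · intro h
      rw [GnS, SimpleGraph.fromRel_adj] at h
      obtain ⟨hne, h⟩ := h
      rcases h with (h | h) | (h | h)
      · exact Or.inl ⟨a, Sym2.congr_right.mpr (Fin.ext (by rw [val_add_one hn a, h]))⟩
      · exact Or.inr ⟨b, h.2, Sym2.eq_iff.mpr (Or.inl ⟨(Fin.ext (by simp [h.1])), rfl⟩)⟩
      · exact Or.inl ⟨b, Sym2.eq_iff.mpr (Or.inr ⟨rfl, Fin.ext (by rw [val_add_one hn b, h])⟩)⟩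
      · exact Or.inr ⟨a, h.2, Sym2.eq_iff.mpr (Or.inr ⟨(Fin.ext (by simp [h.1])), rfl⟩)⟩
    · intro h
      rcases h with ⟨i, hi⟩ | ⟨v, hv, he⟩
      · exact ((GnS n S).mem_edgeSet).mp
          (hi ▸ ((GnS n S).mem_edgeSet).mpr (GnS_adj_succ hn i))
      · exact ((GnS n S).mem_edgeSet).mp
          (he ▸ ((GnS n S).mem_edgeSet).mpr (GnS_adj_chord hn hS hv))

lemma GnSEdges_card [NeZero n] (hn : 4 ≤ n) (hS : S ⊆ Finset.Icc 3 (n - 1)) :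
    (GnSEdges n S).card = n + S.card := by
  have hSmem : ∀ v : Fin n, v.val + 1 ∈ S → 2 ≤ v.val ∧ v.val ≤ n - 2 := by
    intro v hv
    have h1 := Finset.mem_Icc.mp (hS hv)
    have h2 := v.isLt
    omega
  rw [GnSEdges, Finset.card_union_of_disjoint, Finset.card_image_of_injective,
    Finset.card_univ, Fintype.card_fin]
  · congr 1
    rw [Finset.card_image_of_injOn]
    · refine Finset.card_bij' (fun v _ => v.val + 1)
        (fun a ha => (⟨a - 1, by have := Finset.mem_Icc.mp (hS ha); omega⟩ : Fin n))
        ?_ ?_ ?_ ?_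
      · intro v hv
        exact (Finset.mem_filter.mp hv).2
      · intro a ha
        simp only [Finset.mem_filter, Finset.mem_univ, true_and]
        have h1 := Finset.mem_Icc.mp (hS ha)
        have h2 : a - 1 + 1 = a := by omega
        rw [h2]; exact ha
      · intro v hv
        exact Fin.ext (by simp)
      · intro a ha
        have h1 := Finset.mem_Icc.mp (hS ha)
        show a - 1 + 1 = a
        omega
    · intro v hv w hw he
      rw [Finset.mem_coe, Finset.mem_filter] at hv hw
      have hv2 := hSmem v hv.2
      have hw2 := hSmem w hw.2
      rcases Sym2.eq_iff.mp he with ⟨_, h⟩ | ⟨h1, h2⟩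
      · exact h
      · exfalso
        have : w.val = 0 := by rw [← h1]; rfl
        omega
  · intro i j he
    rcases Sym2.eq_iff.mp he with ⟨h, _⟩ | ⟨h1, h2⟩
    · exact h
    · exfalso
      have hi : i.val = (j.val + 1) % n := by
        rw [← val_add_one hn j]; exact congrArg Fin.val h1
      have hj : (i.val + 1) % n = j.val := by
        rw [← val_add_one hn i]; exact congrArg Fin.val h2
      have := i.isLt; have := j.isLt
      rcases Nat.lt_or_ge (j.val + 1) n with h | h
      · rw [Nat.mod_eq_of_lt h] at hi
        rcases Nat.lt_or_ge (i.val + 1) n with h' | h'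
        · rw [Nat.mod_eq_of_lt h'] at hj; omega
        · have he2 : i.val + 1 = n := by omega
          rw [he2, Nat.mod_self] at hj; omega
      · have he2 : j.val + 1 = n := by omega
        rw [he2, Nat.mod_self] at hi
        rw [hi, Nat.mod_eq_of_lt (by omega)] at hj
        omega
  · rw [Finset.disjoint_left]
    intro e he he'
    simp only [Finset.mem_image, Finset.mem_univ, true_and, Finset.mem_filter] at he he'
    obtain ⟨i, hi⟩ := he
    obtain ⟨v, hv, hev⟩ := he'
    have hv2 := hSmem v hv
    rw [← hev] at hi
    rcases Sym2.eq_iff.mp hi with ⟨h1, h2⟩ | ⟨h1, h2⟩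
    · have h0 : i.val = 0 := by rw [h1]; rfl
      have h3 : (i.val + 1) % n = v.val := by
        rw [← val_add_one hn i]; exact congrArg Fin.val h2
      rw [h0, Nat.mod_eq_of_lt (by omega)] at h3
      omega
    · have hiv := congrArg Fin.val h1
      have h3 : (i.val + 1) % n = 0 := by
        rw [← val_add_one hn i]; exact congrArg Fin.val h2
      have := i.isLt
      rcases Nat.lt_or_ge (i.val + 1) n with h | h
      · rw [Nat.mod_eq_of_lt h] at h3; omega
      · omega

end Aux
open SimpleGraph Walk

section Cyc
variable {V : Type*} {G : SimpleGraph V} {u v : V}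

lemma cycle_two_nbrs_base {p : G.Walk v v} (hp : p.IsCycle) :
    ∃ w₁ w₂ : V, w₁ ≠ w₂ ∧ ∀ w, s(v, w) ∈ p.edges ↔ (w = w₁ ∨ w = w₂) := by
  cases p with
  | nil => exact absurd hp (SimpleGraph.Walk.IsCycle.not_of_nil)
  | @cons _ w₁ _ h q =>
    have hlen : 3 ≤ (Walk.cons h q).length := hp.three_le_length
    rw [SimpleGraph.Walk.isCycle_def] at hp
    obtain ⟨htrail, _, hnodup⟩ := hp
    have hedges_nd : ((Walk.cons h q).edges).Nodup := htrail.edges_nodup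
    rw [SimpleGraph.Walk.edges_cons] at hedges_nd
    have hq_nd : q.support.Nodup := by
      rwa [SimpleGraph.Walk.support_cons, List.tail_cons] at hnodup
    have hqnnil : ¬ q.Nil := by
      intro hnil
      have := hnil.eq
      subst this
      have : q.length = 0 := SimpleGraph.Walk.nil_iff_length_eq.mp hnil
      simp [SimpleGraph.Walk.length_cons, this] at hlen
    have hrnnil : ¬ q.reverse.Nil := by
      rwa [SimpleGraph.Walk.nil_iff_length_eq, SimpleGraph.Walk.length_reverse,
        ← SimpleGraph.Walk.nil_iff_length_eq]
    obtain ⟨w₂, h₂, r, hqr⟩ := SimpleGraph.Walk.not_nil_iff.mp hrnnil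
    have hq_eq : q = (Walk.cons h₂ r).reverse := by
      rw [← hqr, SimpleGraph.Walk.reverse_reverse]
    have hq_edges : q.edges = r.edges.reverse ++ [s(v, w₂)] := by
      rw [hq_eq, SimpleGraph.Walk.edges_reverse, SimpleGraph.Walk.edges_cons]
      simp
    have hq_supp : q.support = (v :: r.support).reverse := by
      rw [hq_eq, SimpleGraph.Walk.support_reverse, SimpleGraph.Walk.support_cons]
    have hvr : v ∉ r.support := by
      intro hvr
      rw [hq_supp] at hq_nd
      rw [List.nodup_reverse] at hq_nd
      exact (List.nodup_cons.mp hq_nd).1 hvr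
    have hvw₁ : v ≠ w₁ := fun he => G.loopless.irrefl v (he ▸ h)
    have hvw₂ : v ≠ w₂ := fun he => G.loopless.irrefl v (he ▸ h₂)
    have hw2q : s(v, w₂) ∈ q.edges := by
      rw [hq_edges]; simp
    refine ⟨w₁, w₂, ?_, ?_⟩
    · intro he
      subst he
      rw [List.nodup_cons] at hedges_nd
      exact hedges_nd.1 hw2q
    · intro w
      constructor
      · intro hw
        rw [SimpleGraph.Walk.edges_cons, List.mem_cons] at hw
        rcases hw with hw | hw
        · rcases Sym2.eq_iff.mp hw with ⟨_, h'⟩ | ⟨h1, h2⟩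
          · exact Or.inl h'
          · exact absurd h1 hvw₁
        · rw [hq_edges, List.mem_append] at hw
          rcases hw with hw | hw
          · exfalso
            rw [List.mem_reverse] at hw
            exact hvr (r.fst_mem_support_of_mem_edges hw)
          · rw [List.mem_singleton] at hw
            rcases Sym2.eq_iff.mp hw with ⟨_, h'⟩ | ⟨h1, h2⟩
            · exact Or.inr h'
            · exact absurd h1 hvw₂
      · intro hw
        rcases hw with rfl | rfl
        · rw [SimpleGraph.Walk.edges_cons]; exact List.mem_cons_self
        · rw [SimpleGraph.Walk.edges_cons]
          exact List.mem_cons_of_mem _ hw2q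

lemma cycle_two_nbrs [DecidableEq V] {p : G.Walk u u} (hp : p.IsCycle) (hv : v ∈ p.support) :
    ∃ w₁ w₂ : V, w₁ ≠ w₂ ∧ ∀ w, s(v, w) ∈ p.edges ↔ (w = w₁ ∨ w = w₂) := by
  obtain ⟨w₁, w₂, hne, hiff⟩ := cycle_two_nbrs_base (hp.rotate hv)
  exact ⟨w₁, w₂, hne, fun w => (((p.rotate_edges v hv).mem_iff (a := s(v, w))).symm).trans (hiff w)⟩

lemma cycle_mem_support_iff_edge [DecidableEq V] {p : G.Walk u u} (hp : p.IsCycle) (v : V) :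
    v ∈ p.support ↔ ∃ w, s(v, w) ∈ p.edges := by
  constructor
  · intro hv
    obtain ⟨w₁, _, _, hiff⟩ := cycle_two_nbrs hp hv
    exact ⟨w₁, (hiff w₁).mpr (Or.inl rfl)⟩
  · rintro ⟨w, hw⟩
    exact p.fst_mem_support_of_mem_edges hw

end Cyc

section Main
variable {n : ℕ} {S : Finset ℕ}

lemma walk_between [NeZero n] (hn : 4 ≤ n) {a b : Fin n} (w : (GnS n S).Walk a b) :
    (0 : Fin n) ∉ w.support → ∀ (k : ℕ) (hk : k < n),
    (a.val ≤ k ∨ b.val ≤ k) → (k ≤ a.val ∨ k ≤ b.val) →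
    (⟨k, hk⟩ : Fin n) ∈ w.support := by
  induction w with
  | nil =>
    rename_i u
    intro _ k hk h1 h2
    simp only [SimpleGraph.Walk.support_nil, List.mem_singleton]
    exact Fin.ext (show (⟨k, hk⟩ : Fin n).val = u.val by simp only [Fin.val_mk]; omega)
  | @cons a c b h q ih =>
    intro h0 k hk h1 h2
    rw [SimpleGraph.Walk.support_cons] at h0 ⊢
    rw [List.mem_cons] at h0 ⊢
    push_neg at h0
    obtain ⟨ha0, hq0⟩ := h0
    by_cases hka : k = a.val
    · exact Or.inl (Fin.ext hka)
    · have hadj := GnS_adj_elim hn h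
      have hc0 : c ≠ 0 := by
        intro hc
        exact hq0 (hc ▸ q.start_mem_support)
      have ha0' : a.val ≠ 0 := fun hv => ha0 ((Fin.ext (by simpa using hv.symm)) : (0 : Fin n) = a)
      have hc0' : c.val ≠ 0 := fun hv => hc0 (Fin.ext (by simpa using hv))
      have hcase : c.val = a.val + 1 ∨ a.val = c.val + 1 := by
        rcases hadj.2 with h' | h' | h' | h' <;> first | omega | (exact Or.inl h') |
          (exact Or.inr h')
      refine Or.inr (ih hq0 k hk ?_ ?_)
      · rcases hcase with h' | h' <;> rcases h1 with h'' | h'' <;>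
          rcases h2 with h''' | h''' <;> omega
      · rcases hcase with h' | h' <;> rcases h1 with h'' | h'' <;>
          rcases h2 with h''' | h''' <;> omega

open Fin.NatCast in
lemma arc_finset_card [NeZero n] (hn : 4 ≤ n) {X Y : Fin n} (hX1 : 1 ≤ X.val)
    (hXY : X.val < Y.val) :
    (insert s((0 : Fin n), X) (insert s((0 : Fin n), Y)
      ((Finset.Ico X.val Y.val).image
        (fun (k : ℕ) => s(((k : Fin n)), (((k + 1 : ℕ)) : Fin n)))))).card
      = Y.val - X.val + 2 := by
  have hYlt := Y.isLt
  have hval : ∀ k ∈ Finset.Ico X.val Y.val,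
      ((k : Fin n)).val = k ∧ (((k + 1 : ℕ) : Fin n)).val = k + 1 := by
    intro k hk
    rw [Finset.mem_Ico] at hk
    exact ⟨Fin.val_cast_of_lt (by omega), Fin.val_cast_of_lt (by omega)⟩
  have h0v : ((0 : Fin n)).val = 0 := rfl
  have hnotin1 : s((0 : Fin n), Y) ∉ (Finset.Ico X.val Y.val).image
      (fun (k : ℕ) => s(((k : Fin n)), (((k + 1 : ℕ)) : Fin n))) := by
    intro hmem
    obtain ⟨k, hk, hek⟩ := Finset.mem_image.mp hmem
    obtain ⟨hv1, hv2⟩ := hval k hk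
    rw [Finset.mem_Ico] at hk
    rcases Sym2.eq_iff.mp hek with ⟨e1, e2⟩ | ⟨e1, e2⟩
    · have := congrArg Fin.val e1; rw [hv1, h0v] at this; omega
    · have := congrArg Fin.val e2; rw [hv2, h0v] at this; omega
  have hnotin2 : s((0 : Fin n), X) ∉ insert s((0 : Fin n), Y)
      ((Finset.Ico X.val Y.val).image
        (fun (k : ℕ) => s(((k : Fin n)), (((k + 1 : ℕ)) : Fin n)))) := by
    intro hmem
    rcases Finset.mem_insert.mp hmem with hmem | hmem
    · rcases Sym2.eq_iff.mp hmem with ⟨_, e2⟩ | ⟨e1, _⟩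
      · have := congrArg Fin.val e2; omega
      · have := congrArg Fin.val e1; rw [h0v] at this; omega
    · obtain ⟨k, hk, hek⟩ := Finset.mem_image.mp hmem
      obtain ⟨hv1, hv2⟩ := hval k hk
      rw [Finset.mem_Ico] at hk
      rcases Sym2.eq_iff.mp hek with ⟨e1, e2⟩ | ⟨e1, e2⟩
      · have := congrArg Fin.val e1; rw [hv1, h0v] at this; omega
      · have := congrArg Fin.val e2; rw [hv2, h0v] at this; omega
  have hinj : Set.InjOn (fun (k : ℕ) => s(((k : Fin n)), (((k + 1 : ℕ)) : Fin n)))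
      ↑(Finset.Ico X.val Y.val) := by
    intro k hk j hj he
    obtain ⟨hv1, hv2⟩ := hval k (Finset.mem_coe.mp hk)
    obtain ⟨hw1, hw2⟩ := hval j (Finset.mem_coe.mp hj)
    rcases Sym2.eq_iff.mp he with ⟨e1, _⟩ | ⟨e1, e2⟩
    · have := congrArg Fin.val e1; rw [hv1, hw1] at this; exact this
    · have h1 := congrArg Fin.val e1; rw [hv1, hw2] at h1
      have h2 := congrArg Fin.val e2; rw [hv2, hw1] at h2
      omega
  rw [Finset.card_insert_of_notMem hnotin2, Finset.card_insert_of_notMem hnotin1,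
    Finset.card_image_of_injOn hinj, Nat.card_Ico]

end Main

open Fin.NatCast in
lemma classify {n : ℕ} {S : Finset ℕ} [NeZero n] (hn : 4 ≤ n)
    (hS : S ⊆ Finset.Icc 3 (n - 1)) {u : Fin n} {p : (GnS n S).Walk u u}
    (hp : p.IsCycle) :
    ∃ X Y : Fin n, 1 ≤ X.val ∧ X.val < Y.val ∧ Y.val ≤ n - 1 ∧
      (X.val = 1 ∨ X.val = n - 1 ∨ X.val + 1 ∈ S) ∧
      (Y.val = 1 ∨ Y.val = n - 1 ∨ Y.val + 1 ∈ S) ∧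
      (∀ e, e ∈ p.edges ↔ (e = s(0, X) ∨ e = s(0, Y) ∨
        ∃ (k : ℕ) (hk : k < n) (hk1 : k + 1 < n),
          X.val ≤ k ∧ k < Y.val ∧ e = s((⟨k, hk⟩ : Fin n), (⟨k + 1, hk1⟩ : Fin n)))) ∧
      p.length = Y.val - X.val + 2 := by
  classical
  have hadj_of_edge : ∀ {a b : Fin n}, s(a, b) ∈ p.edges → (GnS n S).Adj a b :=
    fun h => p.edges_subset_edgeSet h
  -- every support vertex that is maximal (resp. minimal) among nonzero support vertices
  -- is joined to 0 by an edge of p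
  have hkey : ∀ m ∈ p.support, m ≠ 0 →
      ((∀ w ∈ p.support, w ≠ 0 → w.val ≤ m.val) ∨
       (∀ w ∈ p.support, w ≠ 0 → m.val ≤ w.val)) → s(m, 0) ∈ p.edges := by
    intro m hm hm0 hext
    obtain ⟨w₁, w₂, hne, hiff⟩ := cycle_two_nbrs hp hm
    have hm0' : m.val ≠ 0 := fun h => hm0 (Fin.ext h)
    have step : ∀ w, s(m, w) ∈ p.edges → w ≠ 0 →
        (w.val = m.val + 1 ∨ m.val = w.val + 1) := by
      intro w hw hw0
      have hadj := GnS_adj_elim hn (hadj_of_edge hw)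
      have hw0' : w.val ≠ 0 := fun h => hw0 (Fin.ext h)
      rcases hadj.2 with h | h | h | h
      · omega
      · omega
      · exact Or.inl h
      · exact Or.inr h
    by_cases h1 : w₁ = 0
    · exact h1 ▸ (hiff w₁).mpr (Or.inl rfl)
    by_cases h2 : w₂ = 0
    · exact h2 ▸ (hiff w₂).mpr (Or.inr rfl)
    exfalso
    have he1 : s(m, w₁) ∈ p.edges := (hiff w₁).mpr (Or.inl rfl)
    have he2 : s(m, w₂) ∈ p.edges := (hiff w₂).mpr (Or.inr rfl)
    have hs1 : w₁ ∈ p.support := p.snd_mem_support_of_mem_edges he1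
    have hs2 : w₂ ∈ p.support := p.snd_mem_support_of_mem_edges he2
    have hst1 := step w₁ he1 h1
    have hst2 := step w₂ he2 h2
    rcases hext with hext | hext
    · have hb1 := hext w₁ hs1 h1
      have hb2 := hext w₂ hs2 h2
      exact hne (Fin.ext (by omega))
    · have hb1 := hext w₁ hs1 h1
      have hb2 := hext w₂ hs2 h2
      exact hne (Fin.ext (by omega))
  -- there is a nonzero support vertex
  have hnonzero : ∃ w ∈ p.support, w ≠ 0 := by
    obtain ⟨w₁, w₂, hne, hiff⟩ := cycle_two_nbrs hp p.start_mem_support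
    by_cases hu : u = 0
    · by_cases h1 : w₁ = 0
      · refine ⟨w₂, p.snd_mem_support_of_mem_edges ((hiff w₂).mpr (Or.inr rfl)), ?_⟩
        intro h2; exact hne (h1.trans h2.symm)
      · exact ⟨w₁, p.snd_mem_support_of_mem_edges ((hiff w₁).mpr (Or.inl rfl)), h1⟩
    · exact ⟨u, p.start_mem_support, hu⟩
  -- extract max and min
  have hTne : (p.support.toFinset.filter (fun w => w ≠ 0)).Nonempty := by
    obtain ⟨w, hw, hw0⟩ := hnonzero
    exact ⟨w, Finset.mem_filter.mpr ⟨List.mem_toFinset.mpr hw, hw0⟩⟩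
  obtain ⟨m, hmT, hmax⟩ := Finset.exists_max_image _ (fun w : Fin n => w.val) hTne
  obtain ⟨m', hm'T, hmin⟩ := Finset.exists_min_image _ (fun w : Fin n => w.val) hTne
  rw [Finset.mem_filter, List.mem_toFinset] at hmT hm'T
  have hmax' : ∀ w ∈ p.support, w ≠ 0 → w.val ≤ m.val := by
    intro w hw hw0
    exact hmax w (Finset.mem_filter.mpr ⟨List.mem_toFinset.mpr hw, hw0⟩)
  have hmin' : ∀ w ∈ p.support, w ≠ 0 → m'.val ≤ w.val := by
    intro w hw hw0
    exact hmin w (Finset.mem_filter.mpr ⟨List.mem_toFinset.mpr hw, hw0⟩)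
  have hmedge : s(m, 0) ∈ p.edges := hkey m hmT.1 hmT.2 (Or.inl hmax')
  have hm'edge : s(m', 0) ∈ p.edges := hkey m' hm'T.1 hm'T.2 (Or.inr hmin')
  have h0supp : (0 : Fin n) ∈ p.support := p.snd_mem_support_of_mem_edges hmedge
  -- the two neighbors of 0
  obtain ⟨z₁, z₂, hzne, hziff⟩ := cycle_two_nbrs hp h0supp
  have hzval : z₁.val ≠ z₂.val := fun h => hzne (Fin.ext h)
  obtain ⟨X, Y, hXY, h0iff⟩ : ∃ X Y : Fin n, X.val < Y.val ∧
      ∀ w, s(0, w) ∈ p.edges ↔ (w = X ∨ w = Y) := by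
    rcases Nat.lt_or_ge z₁.val z₂.val with h | h
    · exact ⟨z₁, z₂, h, hziff⟩
    · exact ⟨z₂, z₁, by omega, fun w => (hziff w).trans or_comm⟩
  have hXedge : s(0, X) ∈ p.edges := (h0iff X).mpr (Or.inl rfl)
  have hYedge : s(0, Y) ∈ p.edges := (h0iff Y).mpr (Or.inr rfl)
  have hXP := GnS_adj_zero hn (hadj_of_edge hXedge)
  have hYP := GnS_adj_zero hn (hadj_of_edge hYedge)
  have hXsupp : X ∈ p.support := p.snd_mem_support_of_mem_edges hXedge
  have hYsupp : Y ∈ p.support := p.snd_mem_support_of_mem_edges hYedge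
  have hX0 : X ≠ 0 := fun h => hXP.1 (by rw [h]; rfl)
  have hY0 : Y ≠ 0 := fun h => hYP.1 (by rw [h]; rfl)
  -- Y is the max, X is the min
  have hmY : m = Y := by
    have : m = X ∨ m = Y := (h0iff m).mp (Sym2.eq_swap ▸ hmedge)
    rcases this with h | h
    · exfalso
      have := hmax' Y hYsupp hY0
      rw [h] at this
      omega
    · exact h
  have hm'X : m' = X := by
    have : m' = X ∨ m' = Y := (h0iff m').mp (Sym2.eq_swap ▸ hm'edge)
    rcases this with h | h
    · exact h
    · exfalso
      have := hmin' X hXsupp hX0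
      rw [h] at this
      omega
  have hYmax : ∀ w ∈ p.support, w ≠ 0 → w.val ≤ Y.val := hmY ▸ hmax'
  have hXmin : ∀ w ∈ p.support, w ≠ 0 → X.val ≤ w.val := hm'X ▸ hmin'
  have hX1 : 1 ≤ X.val := by
    have : X.val ≠ 0 := fun h => hX0 (Fin.ext h)
    omega
  have hYn : Y.val ≤ n - 1 := by have := Y.isLt; omega
  -- interval is contained in the support
  have hInt : ∀ (k : ℕ) (hk : k < n), X.val ≤ k → k ≤ Y.val →
      (⟨k, hk⟩ : Fin n) ∈ p.support := by
    intro k hk hXk hkY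
    set c := p.rotate 0 h0supp with hc_def
    have hc : c.IsCycle := hp.rotate h0supp
    have hc_edges : ∀ e, e ∈ c.edges ↔ e ∈ p.edges := fun e => (p.rotate_edges 0 h0supp).mem_iff
    have hc_supp_sub : ∀ w, w ∈ c.support → w ∈ p.support := by
      intro w hw
      obtain ⟨w', hw'⟩ := (cycle_mem_support_iff_edge hc w).mp hw
      exact p.fst_mem_support_of_mem_edges ((hc_edges _).mp hw')
    obtain ⟨x₀, hx₀adj, q, hc_eq⟩ := SimpleGraph.Walk.not_nil_iff.mp hc.not_nil
    have hlen3 : 3 ≤ c.length := hc.three_le_length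
    have hqnnil : ¬ q.Nil := by
      intro hnil
      have hq0 : q.length = 0 := SimpleGraph.Walk.nil_iff_length_eq.mp hnil
      rw [hc_eq, SimpleGraph.Walk.length_cons, hq0] at hlen3
      omega
    have hrnnil : ¬ q.reverse.Nil := by
      rwa [SimpleGraph.Walk.nil_iff_length_eq, SimpleGraph.Walk.length_reverse,
        ← SimpleGraph.Walk.nil_iff_length_eq]
    obtain ⟨y₀, hy₀adj, r, hqr⟩ := SimpleGraph.Walk.not_nil_iff.mp hrnnil
    have hq_eq : q = (SimpleGraph.Walk.cons hy₀adj r).reverse := by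
      rw [← hqr, SimpleGraph.Walk.reverse_reverse]
    have hq_supp : q.support = ((0 : Fin n) :: r.support).reverse := by
      rw [hq_eq, SimpleGraph.Walk.support_reverse, SimpleGraph.Walk.support_cons]
    have hcycc := hc
    rw [SimpleGraph.Walk.isCycle_def] at hcycc
    have hnd : q.support.Nodup := by
      have h' := hcycc.2.2
      rw [hc_eq, SimpleGraph.Walk.support_cons, List.tail_cons] at h'
      exact h'
    have h0r : (0 : Fin n) ∉ r.support := by
      rw [hq_supp, List.nodup_reverse] at hnd
      exact (List.nodup_cons.mp hnd).1
    have hx₀mem : s(0, x₀) ∈ p.edges := by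
      rw [← hc_edges, hc_eq, SimpleGraph.Walk.edges_cons]
      exact List.mem_cons_self
    have hy₀mem : s(0, y₀) ∈ p.edges := by
      rw [← hc_edges, hc_eq, SimpleGraph.Walk.edges_cons]
      refine List.mem_cons_of_mem _ ?_
      rw [hq_eq, SimpleGraph.Walk.edges_reverse, List.mem_reverse,
        SimpleGraph.Walk.edges_cons]
      exact List.mem_cons_self
    have hx₀XY := (h0iff x₀).mp hx₀mem
    have hy₀XY := (h0iff y₀).mp hy₀mem
    have hxyne : x₀ ≠ y₀ := by
      intro hxy
      have hnd_e : c.edges.Nodup := hcycc.1.edges_nodup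
      rw [hc_eq, SimpleGraph.Walk.edges_cons] at hnd_e
      apply (List.nodup_cons.mp hnd_e).1
      rw [hq_eq, SimpleGraph.Walk.edges_reverse, List.mem_reverse,
        SimpleGraph.Walk.edges_cons]
      exact List.mem_cons.mpr (Or.inl (by rw [hxy]))
    have hvne : x₀.val ≠ y₀.val := fun h => hxyne (Fin.ext h)
    have hx₀v : x₀.val = X.val ∨ x₀.val = Y.val := by
      rcases hx₀XY with h | h
      · exact Or.inl (congrArg Fin.val h)
      · exact Or.inr (congrArg Fin.val h)
    have hy₀v : y₀.val = X.val ∨ y₀.val = Y.val := by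
      rcases hy₀XY with h | h
      · exact Or.inl (congrArg Fin.val h)
      · exact Or.inr (congrArg Fin.val h)
    have hmemr := walk_between hn r h0r k hk (by omega) (by omega)
    have hmq : (⟨k, hk⟩ : Fin n) ∈ q.support := by
      rw [hq_supp, List.mem_reverse]
      exact List.mem_cons_of_mem _ hmemr
    have hmc : (⟨k, hk⟩ : Fin n) ∈ c.support := by
      rw [hc_eq, SimpleGraph.Walk.support_cons]
      exact List.mem_cons_of_mem _ hmq
    exact hc_supp_sub _ hmc
  -- arcs are edges
  have harc : ∀ (k : ℕ) (hk : k < n) (hk1 : k + 1 < n), X.val ≤ k → k < Y.val →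
      s((⟨k, hk⟩ : Fin n), (⟨k + 1, hk1⟩ : Fin n)) ∈ p.edges := by
    intro k hk hk1 hXk hkY
    have hvsupp := hInt k hk hXk (le_of_lt hkY)
    obtain ⟨w₁, w₂, hne, hiff⟩ := cycle_two_nbrs hp hvsupp
    have he1 : s((⟨k, hk⟩ : Fin n), w₁) ∈ p.edges := (hiff w₁).mpr (Or.inl rfl)
    have he2 : s((⟨k, hk⟩ : Fin n), w₂) ∈ p.edges := (hiff w₂).mpr (Or.inr rfl)
    have hstep : ∀ w, s((⟨k, hk⟩ : Fin n), w) ∈ p.edges →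
        (w.val = 0 ∨ w.val = k + 1 ∨ w.val + 1 = k) := by
      intro w hw
      have hadj := GnS_adj_elim hn (hadj_of_edge hw)
      rcases hadj.2 with h | h | h | h
      · exfalso
        have h' : k = 0 := h
        omega
      · exact Or.inl h
      · have h' : w.val = k + 1 := h
        exact Or.inr (Or.inl h')
      · have h' : k = w.val + 1 := h
        exact Or.inr (Or.inr h'.symm)
    have h1 := hstep w₁ he1
    have h2 := hstep w₂ he2
    by_cases hc1 : w₁.val = k + 1
    · have hw : w₁ = ⟨k + 1, hk1⟩ := Fin.ext hc1
      exact hw ▸ he1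
    by_cases hc2 : w₂.val = k + 1
    · have hw : w₂ = ⟨k + 1, hk1⟩ := Fin.ext hc2
      exact hw ▸ he2
    exfalso
    have hvne : w₁.val ≠ w₂.val := fun h => hne (Fin.ext h)
    have final : ∀ wa wb : Fin n, wa ≠ wb →
        s((⟨k, hk⟩ : Fin n), wa) ∈ p.edges → s((⟨k, hk⟩ : Fin n), wb) ∈ p.edges →
        wa.val = 0 → (wb.val = 0 ∨ wb.val + 1 = k) → False := by
      intro wa wb hne' hea heb ha hb
      have hwa0 : wa = 0 := Fin.ext (by rw [ha]; rfl)
      have hs : s(0, (⟨k, hk⟩ : Fin n)) ∈ p.edges := by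
        rw [Sym2.eq_swap]
        exact hwa0 ▸ hea
      have hkX : k = X.val := by
        rcases (h0iff _).mp hs with h | h
        · exact congrArg Fin.val h
        · exfalso
          have h' : k = Y.val := congrArg Fin.val h
          omega
      have hb' : wb.val + 1 = k := by
        rcases hb with h | h
        · exfalso
          exact hne' (Fin.ext (by omega))
        · exact h
      have hwb0 : wb ≠ 0 := by
        intro h
        apply hne'
        rw [hwa0, h]
      have hsupp_b : wb ∈ p.support := p.snd_mem_support_of_mem_edges heb
      have := hXmin wb hsupp_b hwb0
      omega
    have h0or : w₁.val = 0 ∨ w₂.val = 0 := by omega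
    rcases h0or with h0 | h0
    · exact final w₁ w₂ hne he1 he2 h0 (by omega)
    · exact final w₂ w₁ (Ne.symm hne) he2 he1 h0 (by omega)
  -- edge characterization
  have hEdge : ∀ e, e ∈ p.edges ↔ (e = s(0, X) ∨ e = s(0, Y) ∨
      ∃ (k : ℕ) (hk : k < n) (hk1 : k + 1 < n),
        X.val ≤ k ∧ k < Y.val ∧ e = s((⟨k, hk⟩ : Fin n), (⟨k + 1, hk1⟩ : Fin n))) := by
    intro e
    induction e using Sym2.ind with
    | _ a b =>
      constructor
      · intro he
        have hadj := GnS_adj_elim hn (hadj_of_edge he)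
        by_cases ha0 : a = 0
        · subst ha0
          rcases (h0iff b).mp he with h | h
          · exact Or.inl (by rw [h])
          · exact Or.inr (Or.inl (by rw [h]))
        by_cases hb0 : b = 0
        · subst hb0
          have hs : s(0, a) ∈ p.edges := Sym2.eq_swap ▸ he
          rcases (h0iff a).mp hs with h | h
          · exact Or.inl (by rw [h]; exact Sym2.eq_swap)
          · exact Or.inr (Or.inl (by rw [h]; exact Sym2.eq_swap))
        have haS : a ∈ p.support := p.fst_mem_support_of_mem_edges he
        have hbS : b ∈ p.support := p.snd_mem_support_of_mem_edges he
        have haX := hXmin a haS ha0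
        have haY := hYmax a haS ha0
        have hbX := hXmin b hbS hb0
        have hbY := hYmax b hbS hb0
        have ha0' : a.val ≠ 0 := fun h => ha0 (Fin.ext h)
        have hb0' : b.val ≠ 0 := fun h => hb0 (Fin.ext h)
        have hbn := b.isLt
        have han := a.isLt
        rcases hadj.2 with h | h | h | h
        · exact absurd h ha0'
        · exact absurd h hb0'
        · refine Or.inr (Or.inr ⟨a.val, a.isLt, by omega, by omega, by omega, ?_⟩)
          exact Sym2.eq_iff.mpr (Or.inl ⟨Fin.ext rfl, Fin.ext h⟩)
        · refine Or.inr (Or.inr ⟨b.val, b.isLt, by omega, by omega, by omega, ?_⟩)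
          exact Sym2.eq_iff.mpr (Or.inr ⟨Fin.ext h, Fin.ext rfl⟩)
      · intro he
        rcases he with h | h | ⟨k, hk, hk1, hb1, hb2, h3⟩
        · rw [h]; exact hXedge
        · rw [h]; exact hYedge
        · rw [h3]; exact harc k hk hk1 hb1 hb2
  -- length
  have hLen : p.length = Y.val - X.val + 2 := by
    have hF : p.edges.toFinset = insert s((0 : Fin n), X) (insert s((0 : Fin n), Y)
        ((Finset.Ico X.val Y.val).image
          (fun (k : ℕ) => s(((k : Fin n)), (((k + 1 : ℕ)) : Fin n))))) := by
      ext e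
      rw [List.mem_toFinset, hEdge e, Finset.mem_insert, Finset.mem_insert, Finset.mem_image]
      constructor
      · rintro (h | h | ⟨k, hk, hk1, h1, h2, h3⟩)
        · exact Or.inl h
        · exact Or.inr (Or.inl h)
        · refine Or.inr (Or.inr ⟨k, Finset.mem_Ico.mpr ⟨h1, h2⟩, ?_⟩)
          rw [h3]
          exact Sym2.eq_iff.mpr (Or.inl ⟨Fin.ext (Fin.val_cast_of_lt hk),
            Fin.ext (Fin.val_cast_of_lt hk1)⟩)
      · rintro (h | h | ⟨k, hkI, h3⟩)
        · exact Or.inl h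
        · exact Or.inr (Or.inl h)
        · rw [Finset.mem_Ico] at hkI
          have hYlt := Y.isLt
          have hk : k < n := by omega
          have hk1 : k + 1 < n := by omega
          refine Or.inr (Or.inr ⟨k, hk, hk1, hkI.1, hkI.2, ?_⟩)
          rw [← h3]
          exact Sym2.eq_iff.mpr (Or.inl ⟨Fin.ext (Fin.val_cast_of_lt hk),
            Fin.ext (Fin.val_cast_of_lt hk1)⟩)
    have hnd : p.edges.Nodup := hp.isCircuit.isTrail.edges_nodup
    have hcard : p.length = p.edges.toFinset.card := by
      rw [List.toFinset_card_of_nodup hnd, SimpleGraph.Walk.length_edges]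
    rw [hcard, hF, arc_finset_card hn hX1 hXY]
  exact ⟨X, Y, hX1, hXY, hYn, hXP.2, hYP.2, hEdge, hLen⟩

lemma spoke_inj {n : ℕ} {S : Finset ℕ} (hn : 4 ≤ n) (hS : S ⊆ Finset.Icc 3 (n - 1))
    (hdcs : DistinctCycleSet n S) {x y x' y' : ℕ}
    (hx : x = 1 ∨ x = n - 1 ∨ x + 1 ∈ S) (hy : y = 1 ∨ y = n - 1 ∨ y + 1 ∈ S)
    (hx' : x' = 1 ∨ x' = n - 1 ∨ x' + 1 ∈ S) (hy' : y' = 1 ∨ y' = n - 1 ∨ y' + 1 ∈ S)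
    (h1 : 1 ≤ x) (hxy : x < y) (hyn : y ≤ n - 1)
    (h1' : 1 ≤ x') (hxy' : x' < y') (hyn' : y' ≤ n - 1)
    (hd : y - x = y' - x') : x = x' ∧ y = y' := by
  obtain ⟨hD1, hD2, hD3, hD4⟩ := hdcs
  have hSb : ∀ a ∈ S, 3 ≤ a ∧ a ≤ n - 1 := fun a ha => Finset.mem_Icc.mp (hS ha)
  have hx2 : x = 1 ∨ (x + 1 ∈ S ∧ 3 ≤ x + 1 ∧ x + 1 ≤ n - 1) := by
    rcases hx with h | h | h
    · exact Or.inl h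
    · omega
    · exact Or.inr ⟨h, hSb _ h⟩
  have hy2 : y = n - 1 ∨ (y + 1 ∈ S ∧ 3 ≤ y + 1 ∧ y + 1 ≤ n - 1) := by
    rcases hy with h | h | h
    · omega
    · exact Or.inl h
    · exact Or.inr ⟨h, hSb _ h⟩
  have hx'2 : x' = 1 ∨ (x' + 1 ∈ S ∧ 3 ≤ x' + 1 ∧ x' + 1 ≤ n - 1) := by
    rcases hx' with h | h | h
    · exact Or.inl h
    · omega
    · exact Or.inr ⟨h, hSb _ h⟩
  have hy'2 : y' = n - 1 ∨ (y' + 1 ∈ S ∧ 3 ≤ y' + 1 ∧ y' + 1 ≤ n - 1) := by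
    rcases hy' with h | h | h
    · omega
    · exact Or.inl h
    · exact Or.inr ⟨h, hSb _ h⟩
  rcases hx2 with hx2 | hx2 <;> rcases hy2 with hy2 | hy2 <;>
    rcases hx'2 with hx'2 | hx'2 <;> rcases hy'2 with hy'2 | hy'2 <;>
    first
    | omega
    | exact absurd (by omega : y + 1 = n + 2 - (x' + 1)) (hD2 _ hy2.1 _ hx'2.1)
    | exact absurd (by omega : y' + 1 = n + 2 - (x + 1)) (hD2 _ hy'2.1 _ hx2.1)
    | exact absurd (by omega : y + 1 = (y' + 1) - (x' + 1) + 2)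
        (hD3 _ hy2.1 _ hx'2.1 _ hy'2.1 (by omega))
    | exact absurd (by omega : y' + 1 = (y + 1) - (x + 1) + 2)
        (hD3 _ hy'2.1 _ hx2.1 _ hy2.1 (by omega))
    | exact absurd (by omega : n + 2 - (x + 1) = (y' + 1) - (x' + 1) + 2)
        (hD4 _ hx2.1 _ hx'2.1 _ hy'2.1 (by omega))
    | exact absurd (by omega : n + 2 - (x' + 1) = (y + 1) - (x + 1) + 2)
        (hD4 _ hx'2.1 _ hx2.1 _ hy2.1 (by omega))
    | (have := hD1 (x + 1) hx2.1 (y + 1) hy2.1 (x' + 1) hx'2.1 (y' + 1) hy'2.1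
        (by omega) (by omega) (by omega); omega)


/-- If `n ≥ 4` and `S ⊆ {3, ..., n-1}` is a distinct cycle set, then `G_n(S)` has exactly
`n + |S|` edges and no two cycles of `G_n(S)` have the same length. -/
theorem stmt3 (n : ℕ) (hn : 4 ≤ n) (S : Finset ℕ) (hS : S ⊆ Finset.Icc 3 (n - 1))
    (hdcs : DistinctCycleSet n S) :
    (GnS n S).edgeSet.ncard = n + S.card ∧ NoRepeatedCycleLength (GnS n S) := by
  haveI : NeZero n := ⟨by omega⟩
  constructor
  · rw [GnS_edgeSet hn hS, Set.ncard_coe_finset, GnSEdges_card hn hS]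
  · intro u v p q hp hq hlen
    obtain ⟨X, Y, hX1, hXY, hYn, hPX, hPY, hE, hL⟩ := classify hn hS hp
    obtain ⟨X', Y', hX1', hXY', hYn', hPX', hPY', hE', hL'⟩ := classify hn hS hq
    have hdiff : Y.val - X.val = Y'.val - X'.val := by omega
    obtain ⟨hxx, hyy⟩ := spoke_inj hn hS hdcs hPX hPY hPX' hPY' hX1 hXY hYn hX1' hXY'
      hYn' hdiff
    have hXe : X = X' := Fin.ext hxx
    have hYe : Y = Y' := Fin.ext hyy
    ext e
    simp only [Set.mem_setOf_eq]
    rw [hE e, hE' e, hXe, hYe]
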